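/- For every ε > 0 and every δ > 0 there exists a natural number n0 such that for all integers n and k with n > n0 and 1/2 + ε < k/n < 2/3 − ε, the family C(n,k) satisfies |C(n,k)| > (1 − δ)·C(n−1, k−1). -/

import Mathlib

set_option maxHeartbeats 1000000

open Finset

lemma geom_step (g : ℕ → ℝ) (ρ : ℝ) (hρ : 0 < ρ)
    (J : ℕ) (hstep : ∀ j < J, ρ * g j ≤ g (j+1)) :
    ∀ d i, i + d ≤ J → g i * ρ ^ d ≤ g (i + d) := by
  intro d
  induction d with
  | zero => intro i _; simp
  | succ d ih =>
    intro i hi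
    have h1 : ρ * g i ≤ g (i+1) := hstep i (by omega)
    have h2 : g (i+1) * ρ ^ d ≤ g (i + 1 + d) := ih (i+1) (by omega)
    have he : g i * ρ ^ (d+1) = (ρ * g i) * ρ ^ d := by ring
    rw [he]
    have h3 : (ρ * g i) * ρ ^ d ≤ g (i+1) * ρ ^ d :=
      mul_le_mul_of_nonneg_right h1 (by positivity)
    have he2 : i + (d+1) = i + 1 + d := by omega
    rw [he2]
    linarith

lemma sum_geom_bound (g : ℕ → ℝ) (ρ : ℝ) (hρ : 1 < ρ) (hg : ∀ j, 0 ≤ g j)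
    (t s : ℕ) (ht : 1 ≤ t)
    (hstep : ∀ j < t - 1 + s, ρ * g j ≤ g (j+1)) :
    ∑ j ∈ range t, g j ≤ g (t - 1 + s) * ((1/ρ) ^ s * (ρ / (ρ - 1))) := by
  have hρ0 : 0 < ρ := by linarith
  set J := t - 1 + s with hJ
  have key : ∀ j < t, g j ≤ g J * (1/ρ)^(J - j) := by
    intro j hj
    have h1 : g j * ρ ^ (J - j) ≤ g J := by
      have := geom_step g ρ hρ0 J hstep (J - j) j (by omega)
      rwa [show j + (J - j) = J by omega] at this
    have hpow : (0:ℝ) < ρ ^ (J - j) := by positivity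
    rw [div_pow, one_pow, mul_one_div, le_div_iff₀ hpow]
    exact h1
  have h2 : ∑ j ∈ range t, g j ≤ ∑ j ∈ range t, g J * (1/ρ)^(J - j) :=
    Finset.sum_le_sum (fun j hj => key j (mem_range.mp hj))
  have h3 : ∑ j ∈ range t, g J * (1/ρ)^(J - j)
      = g J * ((1/ρ)^s * ∑ i ∈ range t, (1/ρ)^i) := by
    rw [← Finset.sum_range_reflect (fun j => g J * (1/ρ)^(J - j)) t]
    rw [Finset.mul_sum, Finset.mul_sum]
    apply Finset.sum_congr rfl
    intro i hi
    have hi' : i < t := mem_range.mp hi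
    have he : J - (t - 1 - i) = s + i := by omega
    rw [he, pow_add]
  have hr1 : (1/ρ) < 1 := by rw [div_lt_one hρ0]; linarith
  have h4 : ∑ i ∈ range t, (1/ρ)^i ≤ 1 / (1 - 1/ρ) := by
    rw [le_div_iff₀ (by linarith)]
    have hgs := geom_sum_mul (1/ρ : ℝ) t
    have hp : (0:ℝ) ≤ (1/ρ)^t := by positivity
    nlinarith [hgs]
  have h5 : 1 / (1 - 1/ρ) = ρ / (ρ - 1) := by
    rw [one_sub_div (by linarith)]
    rw [one_div_div]
  rw [h3] at h2
  have h6 : g J * ((1/ρ)^s * ∑ i ∈ range t, (1/ρ)^i)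
      ≤ g J * ((1/ρ)^s * (ρ / (ρ - 1))) := by
    apply mul_le_mul_of_nonneg_left _ (hg J)
    apply mul_le_mul_of_nonneg_left _ (by positivity)
    rw [← h5]; exact h4
  linarith

lemma card_inter_eq_le (n T K j : ℕ) :
    (((Icc 2 n).powersetCard K).filter (fun S => (S ∩ Icc 2 T).card = j)).card
      ≤ (T-1).choose j * (n - T).choose (K - j) := by
  classical
  have hle := Finset.card_le_card_of_injOn
    (fun S => (S ∩ Icc 2 T, S \ Icc 2 T))
    (s := ((Icc 2 n).powersetCard K).filter (fun S => (S ∩ Icc 2 T).card = j))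
    (t := ((Icc 2 T).powersetCard j) ×ˢ ((Icc (T+1) n).powersetCard (K - j)))
    ?_ ?_
  · calc _ ≤ _ := hle
      _ = (T-1).choose j * (n - T).choose (K - j) := by
        rw [Finset.card_product, Finset.card_powersetCard, Finset.card_powersetCard,
          Nat.card_Icc, Nat.card_Icc]
        congr 2 <;> omega
  · intro S hS
    simp only [Finset.mem_coe, mem_filter, Finset.mem_powersetCard] at hS
    obtain ⟨⟨hsub, hcard⟩, hinter⟩ := hS
    simp only [Finset.mem_coe, Finset.mem_product, Finset.mem_powersetCard]
    refine ⟨⟨inter_subset_right, hinter⟩, ?_, ?_⟩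
    · intro x hx
      simp only [mem_sdiff, Finset.mem_Icc] at hx ⊢
      obtain ⟨hxS, hxT⟩ := hx
      have := hsub hxS
      simp only [Finset.mem_Icc] at this
      omega
    · have := Finset.card_inter_add_card_sdiff S (Icc 2 T)
      omega
  · intro S hS S' hS' h
    simp only [Prod.mk.injEq] at h
    ext x
    by_cases hx : x ∈ Icc 2 T
    · constructor <;> intro hm
      · have hh : x ∈ S ∩ Icc 2 T := mem_inter.mpr ⟨hm, hx⟩
        rw [h.1] at hh; exact (mem_inter.mp hh).1
      · have hh : x ∈ S' ∩ Icc 2 T := mem_inter.mpr ⟨hm, hx⟩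
        rw [← h.1] at hh; exact (mem_inter.mp hh).1
    · constructor <;> intro hm
      · have hh : x ∈ S \ Icc 2 T := mem_sdiff.mpr ⟨hm, hx⟩
        rw [h.2] at hh; exact (mem_sdiff.mp hh).1
      · have hh : x ∈ S' \ Icc 2 T := mem_sdiff.mpr ⟨hm, hx⟩
        rw [← h.2] at hh; exact (mem_sdiff.mp hh).1

lemma choose_mul_choose_le (n T K j : ℕ) (hT1 : 1 ≤ T) (hTn : T ≤ n) (hj : j ≤ K) :
    (T-1).choose j * (n - T).choose (K - j) ≤ (n-1).choose K := by
  have h : (n-1) = (T-1) + (n - T) := by omega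
  rw [h, Nat.add_choose_eq]
  have hmem : ((j, K - j)) ∈ Finset.HasAntidiagonal.antidiagonal K := by
    rw [Finset.HasAntidiagonal.mem_antidiagonal]; omega
  exact Finset.single_le_sum (f := fun ij : ℕ × ℕ => (T-1).choose ij.1 * (n-T).choose ij.2)
    (fun i _ => Nat.zero_le _) hmem

lemma card_filter_one_mem (n k : ℕ) (hn : 1 ≤ n) (hk : 1 ≤ k) :
    (n-1).choose (k-1) ≤ (((Icc 1 n).powersetCard k).filter (fun F => 1 ∈ F)).card := by
  classical
  have hcardeq : (n-1).choose (k-1) = ((Icc 2 n).powersetCard (k-1)).card := by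
    rw [Finset.card_powersetCard, Nat.card_Icc]
    congr 1
  rw [hcardeq]
  apply Finset.card_le_card_of_injOn (fun S => insert 1 S)
  · intro S hS
    simp only [Finset.mem_coe, Finset.mem_powersetCard] at hS
    obtain ⟨hsub, hcard⟩ := hS
    have h1 : (1:ℕ) ∉ S := fun h => by
      have := hsub h; simp only [Finset.mem_Icc] at this; omega
    simp only [Finset.mem_coe, mem_filter, Finset.mem_powersetCard]
    refine ⟨⟨?_, ?_⟩, mem_insert_self _ _⟩
    · intro x hx
      rcases mem_insert.mp hx with h | h
      · subst h; simp only [Finset.mem_Icc]; omega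
      · have := hsub h; simp only [Finset.mem_Icc] at this ⊢; omega
    · rw [Finset.card_insert_of_notMem h1, hcard]; omega
  · intro S hS S' hS' h
    simp only [Finset.mem_coe, Finset.mem_powersetCard] at hS hS'
    have h1 : (1:ℕ) ∉ S := fun hm => by
      have := hS.1 hm; simp only [Finset.mem_Icc] at this; omega
    have h1' : (1:ℕ) ∉ S' := fun hm => by
      have := hS'.1 hm; simp only [Finset.mem_Icc] at this; omega
    have := congrArg (fun T => Finset.erase T 1) h
    simpa [Finset.erase_insert h1, Finset.erase_insert h1'] using this

lemma card_bad_le (n k T t : ℕ) :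
    ((((Icc 1 n).powersetCard k).filter
        (fun F => 1 ∈ F ∧ (F ∩ Icc 2 T).card < t)).card : ℕ)
      ≤ ∑ j ∈ range t, (T-1).choose j * (n - T).choose (k-1-j) := by
  classical
  set badS := ((Icc 2 n).powersetCard (k-1)).filter (fun S => (S ∩ Icc 2 T).card < t)
    with hbadS
  have step1 : (((Icc 1 n).powersetCard k).filter
      (fun F => 1 ∈ F ∧ (F ∩ Icc 2 T).card < t)).card ≤ badS.card := by
    apply Finset.card_le_card_of_injOn (fun F => F.erase 1)
    · intro F hF
      simp only [Finset.mem_coe, mem_filter, Finset.mem_powersetCard] at hF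
      obtain ⟨⟨hsub, hcard⟩, h1F, hlt⟩ := hF
      simp only [Finset.mem_coe, hbadS, mem_filter, Finset.mem_powersetCard]
      refine ⟨⟨?_, ?_⟩, ?_⟩
      · intro x hx
        simp only [Finset.mem_erase] at hx
        have := hsub hx.2
        simp only [Finset.mem_Icc] at this ⊢
        omega
      · rw [Finset.card_erase_of_mem h1F, hcard]
      · have heq : F.erase 1 ∩ Icc 2 T = F ∩ Icc 2 T := by
          ext x
          simp only [mem_inter, Finset.mem_erase, Finset.mem_Icc]
          constructor
          · rintro ⟨⟨_, h⟩, h2⟩; exact ⟨h, h2⟩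
          · rintro ⟨h, h2⟩; exact ⟨⟨by omega, h⟩, h2⟩
        rw [heq]; exact hlt
    · intro F hF F' hF' h
      simp only [Finset.mem_coe, mem_filter] at hF hF'
      have := congrArg (fun S => insert 1 S) h
      simpa [Finset.insert_erase hF.2.1, Finset.insert_erase hF'.2.1] using this
  have step2 : badS ⊆ (range t).biUnion
      (fun j => ((Icc 2 n).powersetCard (k-1)).filter
        (fun S => (S ∩ Icc 2 T).card = j)) := by
    intro S hS
    simp only [hbadS, mem_filter] at hS
    simp only [Finset.mem_biUnion, mem_range, mem_filter]
    exact ⟨(S ∩ Icc 2 T).card, hS.2, hS.1, rfl⟩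
  calc _ ≤ badS.card := step1
    _ ≤ _ := Finset.card_le_card step2
    _ ≤ ∑ j ∈ range t, (((Icc 2 n).powersetCard (k-1)).filter
        (fun S => (S ∩ Icc 2 T).card = j)).card := Finset.card_biUnion_le
    _ ≤ _ := Finset.sum_le_sum (fun j _ => card_inter_eq_le n T (k-1) j)

lemma scalar_ineq (ε s N x tr a b : ℝ) (hε : 0 < ε) (hε12 : ε < 1/12) (hs : 1 ≤ s)
    (hx1 : N/2 + ε*N < x) (hx2 : 3*x < 2*N - 3*ε*N) (hN : 40*(s+2) ≤ ε*N)
    (ht1 : x/2 ≤ tr) (ht2 : tr ≤ x/2 + 1/2) (ha1 : x - 1 ≤ a) (ha2 : a ≤ x)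
    (hb1 : N - x - 1 ≤ b) (hb2 : b ≤ N - x) :
    (1+ε) * ((tr - 1 + s) * (b - (x-1) + (tr - 1 + s)))
      ≤ (a - (tr-1+s) + 1) * ((x-1) - (tr-1+s) + 1) := by
  have hεN0 : (0:ℝ) ≤ ε*N := by linarith [hN, hs]
  have hN' : (0:ℝ) < N := by
    by_contra h
    push_neg at h
    have : ε * N ≤ 0 := mul_nonpos_of_nonneg_of_nonpos hε.le h
    linarith
  have hNbig : 480 * (s + 2) ≤ N := by
    have h12 : (12:ℝ) < 1/ε := by rw [lt_div_iff₀ hε]; linarith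
    calc (480:ℝ)*(s+2) = 12 * (40*(s+2)) := by ring
      _ ≤ (1/ε) * (ε * N) := by
          apply mul_le_mul (le_of_lt h12) hN (by linarith) (by positivity)
      _ = N := by field_simp
  have hx480 : 240 * (s+2) ≤ x := by linarith
  have hεx : ε * (N/2) ≤ ε * x := by
    apply mul_le_mul_of_nonneg_left _ hε.le
    linarith
  have hεs : ε * s ≤ s := by
    calc ε * s ≤ 1 * s := mul_le_mul_of_nonneg_right (by linarith) (by linarith)
      _ = s := one_mul s
  have keyC : (1+ε) * (N - 3*x/2 + s + 1/2) ≤ x/2 - 3*s + 3/2 := by nlinarith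
  have hu : (0:ℝ) ≤ x/2 + s - 1/2 := by linarith
  have hstepC : (1+ε) * ((x/2 + s - 1/2) * (N - 3*x/2 + s + 1/2))
      ≤ (x/2 - s + 1/2) * (x/2 - s + 1/2) := by
    have h1 : (x/2 + s - 1/2) * ((1+ε) * (N - 3*x/2 + s + 1/2))
        ≤ (x/2 + s - 1/2) * (x/2 - 3*s + 3/2) :=
      mul_le_mul_of_nonneg_left keyC hu
    have h2 : (x/2 + s - 1/2) * (x/2 - 3*s + 3/2)
        ≤ (x/2 - s + 1/2) * (x/2 - s + 1/2) := by nlinarith [sq_nonneg (s - 1/2)]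
    have hring : (1+ε) * ((x/2 + s - 1/2) * (N - 3*x/2 + s + 1/2))
        = (x/2 + s - 1/2) * ((1+ε) * (N - 3*x/2 + s + 1/2)) := by ring
    linarith
  have hJr0 : (0:ℝ) ≤ tr - 1 + s := by linarith
  have hB0 : (0:ℝ) ≤ N - 3*x/2 + s + 1/2 := by linarith
  have hJ1 : tr - 1 + s ≤ x/2 + s - 1/2 := by linarith
  have hinner : b - (x-1) + (tr - 1 + s) ≤ N - 3*x/2 + s + 1/2 := by linarith
  have hstepB : (tr - 1 + s) * (b - (x-1) + (tr - 1 + s))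
      ≤ (x/2 + s - 1/2) * (N - 3*x/2 + s + 1/2) := by
    calc (tr - 1 + s) * (b - (x-1) + (tr - 1 + s))
        ≤ (tr - 1 + s) * (N - 3*x/2 + s + 1/2) :=
          mul_le_mul_of_nonneg_left hinner hJr0
      _ ≤ _ := mul_le_mul_of_nonneg_right hJ1 hB0
  have hL1 : (0:ℝ) ≤ x/2 - s + 1/2 := by linarith
  have f1 : x/2 - s + 1/2 ≤ (x-1) - (tr-1+s) + 1 := by linarith
  have f2 : x/2 - s + 1/2 ≤ a - (tr-1+s) + 1 := by linarith
  have hstepA : (x/2 - s + 1/2) * (x/2 - s + 1/2)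
      ≤ (a - (tr-1+s) + 1) * ((x-1) - (tr-1+s) + 1) :=
    mul_le_mul f2 f1 hL1 (by linarith)
  calc (1+ε) * ((tr - 1 + s) * (b - (x-1) + (tr - 1 + s)))
      ≤ (1+ε) * ((x/2 + s - 1/2) * (N - 3*x/2 + s + 1/2)) :=
        mul_le_mul_of_nonneg_left hstepB (by linarith)
    _ ≤ (x/2 - s + 1/2) * (x/2 - s + 1/2) := hstepC
    _ ≤ _ := hstepA

lemma analytic (ε δ : ℝ) (hε : 0 < ε) (hδ : 0 < δ) (hε12 : ε < 1/12) :
    ∃ n0 : ℕ, ∀ n k T : ℕ, n0 < n → (T = k ∨ T = k + 1) →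
      1/2 + ε < (k:ℝ)/n → (k:ℝ)/n < 2/3 - ε →
      ((∑ j ∈ range ((k+1)/2), (T-1).choose j * (n-T).choose (k-1-j) : ℕ) : ℝ)
        ≤ δ/2 * ((n-1).choose (k-1)) := by
  classical
  set ρ : ℝ := 1 + ε with hρdef
  have hρ : 1 < ρ := by simp [hρdef]; linarith
  have hρ0 : (0:ℝ) < ρ := by linarith
  obtain ⟨s₀, hs₀⟩ := pow_unbounded_of_one_lt (2*ρ/(ε*δ)) hρ
  set s := s₀ + 1 with hsdef
  clear_value s
  have hspow : 2*ρ/(ε*δ) < ρ^s := by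
    calc 2*ρ/(ε*δ) < ρ^s₀ := hs₀
      _ ≤ ρ^s := pow_le_pow_right₀ (le_of_lt hρ) (by omega)
  refine ⟨⌈40*((s:ℝ)+2)/ε⌉₊ + 1, ?_⟩
  intro n k T hn hTor h1 h2
  -- basic real facts
  have hnR : (0:ℝ) < n := by
    have : 0 < n := by omega
    exact_mod_cast this
  have hx1 : (n:ℝ)/2 + ε*n < k := by
    have h := (lt_div_iff₀ hnR).mp h1
    nlinarith
  have hx2 : 3*(k:ℝ) < 2*n - 3*ε*n := by
    have := (div_lt_iff₀ hnR).mp h2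
    nlinarith
  have hnceil : (40*((s:ℝ)+2)/ε) ≤ n := by
    have h1' : (⌈40*((s:ℝ)+2)/ε⌉₊ : ℝ) + 1 ≤ n := by
      have : (⌈40*((s:ℝ)+2)/ε⌉₊ + 1 : ℕ) ≤ n := hn.le
      exact_mod_cast this
    calc (40*((s:ℝ)+2)/ε) ≤ ⌈40*((s:ℝ)+2)/ε⌉₊ := Nat.le_ceil _
      _ ≤ (⌈40*((s:ℝ)+2)/ε⌉₊ : ℝ) + 1 := by linarith
      _ ≤ n := h1'
  have hεn : 40*((s:ℝ)+2) ≤ ε*n := by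
    rw [div_le_iff₀ hε] at hnceil
    linarith [mul_comm ε (n:ℝ) ▸ hnceil]
  have hsR : (1:ℝ) ≤ s := by
    have : 1 ≤ s := by omega
    exact_mod_cast this
  -- ℕ facts
  have hnbig : 480*(s+2) ≤ n := by
    have h12 : (12:ℝ) < 1/ε := by rw [lt_div_iff₀ hε]; linarith
    have : (480:ℝ)*((s:ℝ)+2) ≤ n := by
      calc (480:ℝ)*((s:ℝ)+2) = 12 * (40*((s:ℝ)+2)) := by ring
        _ ≤ (1/ε) * (ε * n) := by
            apply mul_le_mul (le_of_lt h12) hεn (by linarith) (by positivity)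
        _ = n := by field_simp
    exact_mod_cast (by push_cast; linarith : ((480*(s+2) : ℕ) : ℝ) ≤ n)
  have hkbig : 240*(s+2) ≤ k := by
    have : (240:ℝ)*((s:ℝ)+2) ≤ k := by
      have : ((480*(s+2) : ℕ) : ℝ) ≤ n := by exact_mod_cast hnbig
      push_cast at this
      linarith
    exact_mod_cast (by push_cast; linarith : ((240*(s+2) : ℕ) : ℝ) ≤ k)
  have h3k : 3*k + 120 ≤ 2*n := by
    have : (3*(k:ℝ)) + 120 ≤ 2*n := by nlinarith
    exact_mod_cast (by push_cast; linarith : ((3*k + 120 : ℕ) : ℝ) ≤ (2*n : ℕ))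
  have h2k : n + 1 ≤ 2*k := by
    have : ((n:ℝ)) + 1 ≤ 2*k := by nlinarith
    exact_mod_cast (by push_cast; linarith : ((n + 1 : ℕ) : ℝ) ≤ ((2*k : ℕ) : ℝ))
  -- core argument
  set t := (k+1)/2 with htdef
  set K := k - 1 with hKdef
  set a := T - 1 with hadef
  set b := n - T with hbdef
  set J := t - 1 + s with hJdef
  clear_value t K a b J
  have hk1 : 1 ≤ k := by omega
  have hT1 : 1 ≤ T := by rcases hTor with h|h <;> omega
  have hTn : T ≤ n := by rcases hTor with h|h <;> omega
  have hJK : J ≤ K := by rcases hTor with h|h <;> omega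
  have hJ1 : 1 ≤ J := by omega
  have hKa : K ≤ a := by rcases hTor with h|h <;> omega
  have hKJb : K - J ≤ b := by rcases hTor with h|h <;> omega
  have ht1 : 1 ≤ t := by omega
  have hJa : J ≤ a := le_trans hJK hKa
  -- real bounds on t, a, b
  have htR1 : (k:ℝ)/2 ≤ t := by
    have h : k ≤ 2*t := by omega
    have := (Nat.cast_le (α := ℝ)).mpr h
    push_cast at this
    linarith
  have htR2 : (t:ℝ) ≤ (k:ℝ)/2 + 1/2 := by
    have h : 2*t ≤ k + 1 := by omega
    have := (Nat.cast_le (α := ℝ)).mpr h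
    push_cast at this
    linarith
  have haR1 : (k:ℝ) - 1 ≤ a := by
    have h : k ≤ a + 1 := by rcases hTor with h|h <;> omega
    have := (Nat.cast_le (α := ℝ)).mpr h
    push_cast at this
    linarith
  have haR2 : (a:ℝ) ≤ k := by
    have h : a ≤ k := by rcases hTor with h|h <;> omega
    exact_mod_cast h
  have hbR1 : (n:ℝ) - k - 1 ≤ b := by
    have h : n ≤ b + k + 1 := by rcases hTor with h|h <;> omega
    have := (Nat.cast_le (α := ℝ)).mpr h
    push_cast at this
    linarith
  have hbR2 : (b:ℝ) ≤ (n:ℝ) - k := by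
    have h : b + k ≤ n := by rcases hTor with h|h <;> omega
    have := (Nat.cast_le (α := ℝ)).mpr h
    push_cast at this
    linarith
  set g : ℕ → ℝ := fun j => ((a.choose j * b.choose (K - j) : ℕ) : ℝ) with hgdef
  have hg0 : ∀ j, 0 ≤ g j := fun j => Nat.cast_nonneg _
  have hJR : (J:ℝ) = (t:ℝ) - 1 + (s:ℝ) := by
    rw [hJdef]
    push_cast [Nat.cast_sub ht1]
    ring
  have hKR : (K:ℝ) = (k:ℝ) - 1 := by
    rw [hKdef]
    push_cast [Nat.cast_sub hk1]
    ring
  have hstep : ∀ j < J, ρ * g j ≤ g (j+1) := by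
    intro j hj
    have hjK : j < K := by omega
    have hja : j < a := by omega
    have h1 := Nat.choose_succ_right_eq a j
    have h2 := Nat.choose_succ_right_eq b (K - (j+1))
    have e1 : K - (j+1) + 1 = K - j := by omega
    rw [e1] at h2
    have E : a.choose j * b.choose (K - j) * ((a - j) * (K - j))
        = a.choose (j+1) * b.choose (K - (j+1)) * ((j+1) * (b - (K - (j+1)))) := by
      calc a.choose j * b.choose (K-j) * ((a-j) * (K-j))
          = (a.choose j * (a-j)) * (b.choose (K-j) * (K-j)) := by ring
        _ = (a.choose (j+1) * (j+1)) * (b.choose (K-(j+1)) * (b - (K-(j+1)))) := by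
            rw [← h1, h2]
        _ = _ := by ring
    have hmono : ρ * (((j+1) * (b - (K-(j+1))) : ℕ) : ℝ) ≤ (((a-j) * (K-j) : ℕ) : ℝ) := by
      have m1 : (j+1) * (b - (K-(j+1))) ≤ J * (b - (K-J)) :=
        Nat.mul_le_mul (by omega) (Nat.sub_le_sub_left (by omega) b)
      have m2 : (a - (J-1)) * (K - (J-1)) ≤ (a-j) * (K-j) :=
        Nat.mul_le_mul (by omega) (by omega)
      have e2 : ((J * (b - (K-J)) : ℕ) : ℝ)
          = ((t:ℝ) - 1 + (s:ℝ)) * ((b:ℝ) - ((k:ℝ)-1) + ((t:ℝ) - 1 + (s:ℝ))) := by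
        push_cast [Nat.cast_sub hKJb, Nat.cast_sub hJK, Nat.cast_sub ht1, Nat.cast_sub hk1]
        simp only [hJR, hKR]
        ring
      have e3 : (((a - (J-1)) * (K - (J-1)) : ℕ) : ℝ)
          = ((a:ℝ) - ((t:ℝ)-1+(s:ℝ)) + 1) * (((k:ℝ)-1) - ((t:ℝ)-1+(s:ℝ)) + 1) := by
        push_cast [Nat.cast_sub (show J - 1 ≤ a by omega), Nat.cast_sub (show J - 1 ≤ K by omega),
          Nat.cast_sub hJ1, Nat.cast_sub ht1, Nat.cast_sub hk1]
        simp only [hJR, hKR]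
        ring
      have key : ρ * ((J * (b - (K-J)) : ℕ) : ℝ)
          ≤ (((a - (J-1)) * (K - (J-1)) : ℕ) : ℝ) := by
        rw [e2, e3, hρdef]
        exact scalar_ineq ε (s:ℝ) (n:ℝ) (k:ℝ) (t:ℝ) (a:ℝ) (b:ℝ)
          hε hε12 hsR hx1 hx2 hεn htR1 htR2 haR1 haR2 hbR1 hbR2
      calc ρ * (((j+1) * (b - (K-(j+1))) : ℕ) : ℝ)
          ≤ ρ * ((J * (b - (K-J)) : ℕ) : ℝ) := by
            apply mul_le_mul_of_nonneg_left _ (le_of_lt hρ0)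
            exact_mod_cast m1
        _ ≤ (((a - (J-1)) * (K - (J-1)) : ℕ) : ℝ) := key
        _ ≤ _ := by exact_mod_cast m2
    have hPpos : (0:ℝ) < (((a-j) * (K-j) : ℕ) : ℝ) := by
      have : 0 < (a-j) * (K-j) := Nat.mul_pos (by omega) (by omega)
      exact_mod_cast this
    have hE : g j * (((a-j)*(K-j) : ℕ):ℝ) = g (j+1) * (((j+1)*(b-(K-(j+1))) : ℕ):ℝ) := by
      simp only [hgdef]
      exact_mod_cast congrArg (Nat.cast : ℕ → ℝ) E
    refine le_of_mul_le_mul_right ?_ hPpos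
    calc ρ * g j * (((a-j)*(K-j) : ℕ):ℝ)
        = ρ * (g j * (((a-j)*(K-j) : ℕ):ℝ)) := by ring
      _ = ρ * (g (j+1) * (((j+1)*(b-(K-(j+1))) : ℕ):ℝ)) := by rw [hE]
      _ = g (j+1) * (ρ * (((j+1)*(b-(K-(j+1))) : ℕ):ℝ)) := by ring
      _ ≤ g (j+1) * (((a-j)*(K-j) : ℕ):ℝ) := mul_le_mul_of_nonneg_left hmono (hg0 _)
  have hstep' : ∀ j < t - 1 + s, ρ * g j ≤ g (j+1) := by rw [← hJdef]; exact hstep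
  have hsum := sum_geom_bound g ρ hρ hg0 t s ht1 hstep'
  rw [← hJdef] at hsum
  have hgJ : g J ≤ (((n-1).choose K : ℕ) : ℝ) := by
    have := choose_mul_choose_le n T K J hT1 hTn hJK
    simp only [hgdef, hadef, hbdef]
    exact_mod_cast this
  have hsmall : (1/ρ)^s * (ρ/(ρ-1)) ≤ δ/2 := by
    have hρs : (0:ℝ) < ρ^s := by positivity
    have hρ1 : ρ - 1 = ε := by rw [hρdef]; ring
    rw [div_pow, one_pow, hρ1]
    rw [div_mul_div_comm, one_mul]
    rw [div_le_iff₀ (by positivity : (0:ℝ) < ρ^s * ε)]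
    have h := hspow
    rw [div_lt_iff₀ (by positivity : (0:ℝ) < ε*δ)] at h
    nlinarith
  have hρ1' : (0:ℝ) < ρ - 1 := by rw [hρdef]; linarith
  have hC0 : (0:ℝ) ≤ (((n-1).choose K : ℕ) : ℝ) := Nat.cast_nonneg _
  calc ((∑ j ∈ range t, a.choose j * b.choose (K-j) : ℕ) : ℝ)
      = ∑ j ∈ range t, g j := by
        rw [Nat.cast_sum]
    _ ≤ g J * ((1/ρ)^s * (ρ/(ρ-1))) := hsum
    _ ≤ (((n-1).choose K : ℕ) : ℝ) * (δ/2) := by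
        apply mul_le_mul hgJ hsmall _ hC0
        apply mul_nonneg (by positivity)
        apply div_nonneg (by linarith) (by linarith)
    _ = δ/2 * ((n-1).choose K : ℝ) := by rw [mul_comm]

/-- The family `𝒞(n,k)`: for even `k = 2l` it consists of the `k`-subsets `F` of
`[n]` with `1 ∈ F` and `|F ∩ [2,2l]| ≥ l`, together with the sets `[2,2l] ∪ {i}`
for `i ∈ [2l+1,n]`; for odd `k = 2l+1` it consists of the `k`-subsets `F` of `[n]`
with `1 ∈ F` and `|F ∩ [2,2l+2]| ≥ l+1`, together with the set `[2,2l+2]`. -/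
def famC (n k : ℕ) : Finset (Finset ℕ) :=
  if k % 2 = 0 then
    ((Finset.Icc 1 n).powersetCard k).filter
        (fun F => 1 ∈ F ∧ k / 2 ≤ (F ∩ Finset.Icc 2 k).card) ∪
      (Finset.Icc (k + 1) n).image (fun i => insert i (Finset.Icc 2 k))
  else
    ((Finset.Icc 1 n).powersetCard k).filter
        (fun F => 1 ∈ F ∧ (k + 1) / 2 ≤ (F ∩ Finset.Icc 2 (k + 1)).card) ∪
      {Finset.Icc 2 (k + 1)}

theorem famC_card_lower_bound :
    ∀ ε δ : ℝ, 0 < ε → 0 < δ → ∃ n0 : ℕ, ∀ n k : ℕ, n0 < n →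
      1 / 2 + ε < (k : ℝ) / n → (k : ℝ) / n < 2 / 3 - ε →
      ((famC n k).card : ℝ) > (1 - δ) * ((n - 1).choose (k - 1) : ℝ) := by
  intro ε δ hε hδ
  by_cases hε12 : ε < 1/12
  · obtain ⟨n0, H⟩ := analytic ε δ hε hδ hε12
    refine ⟨n0, fun n k hn h1 h2 => ?_⟩
    classical
    have hnpos : 0 < n := by omega
    have hnR : (0:ℝ) < n := by exact_mod_cast hnpos
    have hk1 : 1 ≤ k := by
      rcases Nat.eq_zero_or_pos k with h|h
      · subst h; norm_num at h1; linarith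
      · exact h
    have hkR := (lt_div_iff₀ hnR).mp h1
    have hkR2 := (div_lt_iff₀ hnR).mp h2
    have hkn : k < n := by
      have : (k:ℝ) < n := by nlinarith
      exact_mod_cast this
    set T := if k % 2 = 0 then k else k + 1 with hT
    have hTor : T = k ∨ T = k + 1 := by
      by_cases h : k % 2 = 0
      · left; rw [hT, if_pos h]
      · right; rw [hT, if_neg h]
    have hsum := H n k T hn hTor h1 h2
    -- the good sets are contained in famC n k
    have hfam : (((Icc 1 n).powersetCard k).filter
        (fun F => 1 ∈ F ∧ (k+1)/2 ≤ (F ∩ Icc 2 T).card)) ⊆ famC n k := by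
      rw [famC]
      by_cases h : k % 2 = 0
      · rw [if_pos h, hT, if_pos h, show k/2 = (k+1)/2 by omega]
        exact subset_union_left
      · rw [if_neg h, hT, if_neg h]
        exact subset_union_left
    set all := ((Icc 1 n).powersetCard k).filter (fun F => 1 ∈ F) with hall
    set good := ((Icc 1 n).powersetCard k).filter
        (fun F => 1 ∈ F ∧ (k+1)/2 ≤ (F ∩ Icc 2 T).card) with hgood
    set bad := ((Icc 1 n).powersetCard k).filter
        (fun F => 1 ∈ F ∧ (F ∩ Icc 2 T).card < (k+1)/2) with hbad
    have hsplit : good.card + bad.card = all.card := by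
      have hpart := card_filter_add_card_filter_not
        (s := all) (p := fun F => (k+1)/2 ≤ (F ∩ Icc 2 T).card)
      have e1 : all.filter (fun F => (k+1)/2 ≤ (F ∩ Icc 2 T).card) = good := by
        rw [hall, filter_filter, hgood]
      have e2 : all.filter (fun F => ¬ ((k+1)/2 ≤ (F ∩ Icc 2 T).card)) = bad := by
        rw [hall, filter_filter, hbad]
        simp only [not_le]
      rw [e1, e2] at hpart
      exact hpart
    have hallcard : (n-1).choose (k-1) ≤ all.card :=
      card_filter_one_mem n k (by omega) hk1
    have hbadcard : bad.card ≤ ∑ j ∈ range ((k+1)/2),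
        (T-1).choose j * (n - T).choose (k-1-j) := card_bad_le n k T ((k+1)/2)
    have hgoodcard : (n-1).choose (k-1)
        ≤ good.card + ∑ j ∈ range ((k+1)/2), (T-1).choose j * (n - T).choose (k-1-j) := by
      omega
    have hfamcard : good.card ≤ (famC n k).card := card_le_card hfam
    have hcast : ((n-1).choose (k-1) : ℝ) ≤ ((famC n k).card : ℝ)
        + ((∑ j ∈ range ((k+1)/2), (T-1).choose j * (n - T).choose (k-1-j) : ℕ) : ℝ) := by
      have : (n-1).choose (k-1) ≤ (famC n k).card
          + ∑ j ∈ range ((k+1)/2), (T-1).choose j * (n - T).choose (k-1-j) := by omega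
      exact_mod_cast this
    have hCpos : (0:ℝ) < ((n-1).choose (k-1) : ℝ) := by
      have : 0 < (n-1).choose (k-1) := Nat.choose_pos (by omega)
      exact_mod_cast this
    nlinarith [hsum, hcast, hCpos]
  · exact ⟨0, fun n k _ h1 h2 => absurd (by linarith : ε < 1/12) hε12⟩
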